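/- Let d be the code distance of the polynomial remainder code with moduli m_1(x), …, m_L(x), set A = ⌊(d−1)/2⌋, let θ be an integer with 1 ≤ θ ≤ L − 2A, set B = ⌊(L−θ)/2⌋ − A, and let η be a nonnegative integer with η < τ_{(θ)}. Let a(x), b(x) ∈ F[x] with deg(a) < deg(M) and deg(b) < deg(M), and let ã_i(x) (1 ≤ i ≤ L) satisfy deg(ã_i) < deg(m_i); set e_i(x) = ã_i(x) − [a]_{m_i}(x) and f_i(x) = ã_i(x) − [b]_{m_i}(x). If the number of indices i with deg(e_i) > η is at most A, the number of indices i with e_i ≠ 0 is at most A + B, the number of indices i with deg(f_i) > η is at most A, and the number of indices i with f_i ≠ 0 is at most A + B, then a(x) = b(x). (The polynomial remainder code corrects any combination of up to ⌊(d−1)/2⌋ unrestricted residue errors and up to ⌊(L−θ)/2⌋ − ⌊(d−1)/2⌋ residue errors of degree at most η.) -/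

import Mathlib

open Polynomial
open scoped Classical

/-- The code distance of the polynomial remainder code with moduli `m i`, `i ∈ s`. -/
noncomputable def codeDist {F : Type*} [Field F] {ι : Type*} (s : Finset ι)
    (m : ι → Polynomial F) : ℕ :=
  sInf {k | ∃ a : Polynomial F, a ≠ 0 ∧ a.degree < (s.lcm m).degree ∧
    (s.filter fun i => ¬ m i ∣ a).card = k}

/-- The `j`-th smallest element (1-indexed) of a multiset of natural numbers. -/
noncomputable def nthSmallest (s : Multiset ℕ) (j : ℕ) : ℕ :=
  (s.sort (· ≤ ·)).getD (j - 1) 0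

private lemma sorted_filter_le_len {l : List ℕ} (hl : l.Pairwise (· ≤ ·)) {i η : ℕ}
    (hi : i < l.length) (h : η < l.get ⟨i, hi⟩) :
    (l.filter (fun x => x ≤ η)).length ≤ i := by
  have hdrop : (l.drop i).filter (fun x => x ≤ η) = [] := by
    rw [List.filter_eq_nil_iff]
    intro x hx
    obtain ⟨k, hk⟩ := List.get_of_mem hx
    have hik : i + k.1 < l.length := by
      have := k.2; simp [List.length_drop] at this; omega
    have hxe : x = l.get ⟨i + k.1, hik⟩ := by
      rw [← hk]; simp [List.getElem_drop]
    have : l.get ⟨i, hi⟩ ≤ l.get ⟨i + k.1, hik⟩ :=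
      hl.rel_get_of_le (by simp [Fin.le_def])
    simp only [decide_eq_true_eq]
    omega
  have hsplit := List.take_append_drop i l
  have hlen : (l.filter (fun x => x ≤ η)).length =
      ((l.take i).filter (fun x => x ≤ η)).length +
      ((l.drop i).filter (fun x => x ≤ η)).length := by
    conv_lhs => rw [← hsplit]
    rw [List.filter_append, List.length_append]
  rw [hlen, hdrop]
  simpa using le_trans (List.length_filter_le _ _) (by simp)

theorem stmt11 {F : Type*} [Field F] {L : ℕ} (hL : 2 ≤ L)
    (m : Fin L → Polynomial F)
    (hmonic : ∀ i, (m i).Monic)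
    (hdist : Function.Injective m)
    (hdeg : ∀ i, 0 < (m i).degree)
    (hm_lt : ∀ i, (m i).degree < (Finset.univ.lcm m).degree)
    (d : ℕ) (hd : d = codeDist Finset.univ m)
    (A : ℕ) (hA : A = (d - 1) / 2)
    (θ : ℕ) (hθ1 : 1 ≤ θ) (hθ2 : θ ≤ L - 2 * A)
    (B : ℕ) (hB : B = (L - θ) / 2 - A)
    (tau : Fin L → ℕ)
    (htau : ∀ j, tau j = sInf {n | ∃ i, i ≠ j ∧ n = (gcd (m i) (m j)).natDegree})
    (η : ℕ)
    (hη : η < nthSmallest (Finset.univ.val.map tau) θ)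
    (a b : Polynomial F)
    (ha : a.degree < (Finset.univ.lcm m).degree)
    (hb : b.degree < (Finset.univ.lcm m).degree)
    (r : Fin L → Polynomial F)
    (hr : ∀ i, (r i).degree < (m i).degree)
    (e f : Fin L → Polynomial F)
    (he : ∀ i, e i = r i - a %ₘ m i)
    (hf : ∀ i, f i = r i - b %ₘ m i)
    (hecount1 : (Finset.univ.filter fun i =>
      (η : WithBot ℕ) < (e i).degree).card ≤ A)
    (hecount2 : (Finset.univ.filter fun i => e i ≠ 0).card ≤ A + B)
    (hfcount1 : (Finset.univ.filter fun i =>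
      (η : WithBot ℕ) < (f i).degree).card ≤ A)
    (hfcount2 : (Finset.univ.filter fun i => f i ≠ 0).card ≤ A + B) :
    a = b := by
  by_contra hab
  set c : Polynomial F := a - b with hc
  have hc0 : c ≠ 0 := sub_ne_zero.mpr hab
  have hcdeg : c.degree < (Finset.univ.lcm m).degree :=
    lt_of_le_of_lt (degree_sub_le a b) (max_lt ha hb)
  set S : Finset (Fin L) := Finset.univ.filter (fun i => ¬ m i ∣ c) with hS
  -- d ≤ |S|
  have hdS : d ≤ S.card := by
    rw [hd]; exact Nat.sInf_le ⟨c, hc0, hcdeg, rfl⟩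
  -- 1 ≤ d
  have hd1 : 1 ≤ d := by
    by_contra h0
    have hne : {k | ∃ p : Polynomial F, p ≠ 0 ∧ p.degree < (Finset.univ.lcm m).degree ∧
        (Finset.univ.filter fun i => ¬ m i ∣ p).card = k}.Nonempty :=
      ⟨S.card, c, hc0, hcdeg, rfl⟩
    have hd' : d = sInf {k | ∃ p : Polynomial F, p ≠ 0 ∧ p.degree < (Finset.univ.lcm m).degree ∧
        (Finset.univ.filter fun i => ¬ m i ∣ p).card = k} := by rw [hd]; rfl
    have hmem := Nat.sInf_mem hne
    rw [← hd', (by omega : d = 0)] at hmem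
    obtain ⟨p, hp0, hpdeg, hpcard⟩ := hmem
    have hall : ∀ i : Fin L, m i ∣ p := by
      intro i
      by_contra hdvd
      have hi : i ∈ Finset.univ.filter (fun i => ¬ m i ∣ p) := by
        simp [hdvd]
      rw [Finset.card_eq_zero] at hpcard
      rw [hpcard] at hi
      exact absurd hi (Finset.notMem_empty i)
    have hMp : Finset.univ.lcm m ∣ p := Finset.lcm_dvd (fun i _ => hall i)
    exact absurd hpdeg (not_lt.mpr (Polynomial.degree_le_of_dvd hMp hp0))
  -- residue differences
  have hw : ∀ i : Fin L, f i - e i = a %ₘ m i - b %ₘ m i := by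
    intro i; rw [he i, hf i]; ring
  have hmodc : ∀ i : Fin L, c %ₘ m i = f i - e i := by
    intro i; rw [hw i, hc, Polynomial.sub_modByMonic]
  have hSiff : ∀ i : Fin L, i ∈ S ↔ f i ≠ e i := by
    intro i
    simp only [hS, Finset.mem_filter, Finset.mem_univ, true_and]
    rw [← Polynomial.modByMonic_eq_zero_iff_dvd (hmonic i), hmodc i, sub_eq_zero]
  -- S ⊆ {e ≠ 0} ∪ {f ≠ 0}
  have hScard : S.card ≤ (A + B) + (A + B) := by
    have hsub : S ⊆ (Finset.univ.filter fun i => e i ≠ 0) ∪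
        (Finset.univ.filter fun i => f i ≠ 0) := by
      intro i hi
      rw [hSiff i] at hi
      simp only [Finset.mem_union, Finset.mem_filter, Finset.mem_univ, true_and]
      by_contra hcon
      push_neg at hcon
      exact hi (by rw [hcon.2, hcon.1])
    calc S.card ≤ _ := Finset.card_le_card hsub
      _ ≤ _ := le_trans (Finset.card_union_le _ _) (add_le_add hecount2 hfcount2)
  -- bad sets
  set Ebad := Finset.univ.filter (fun i => (η : WithBot ℕ) < (e i).degree) with hEbad
  set Fbad := Finset.univ.filter (fun i => (η : WithBot ℕ) < (f i).degree) with hFbad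
  set T := S \ (Ebad ∪ Fbad) with hT
  have hTcard : 1 ≤ T.card := by
    have h1 : S.card - (Ebad ∪ Fbad).card ≤ T.card := Finset.le_card_sdiff _ _
    have h2 : (Ebad ∪ Fbad).card ≤ A + A :=
      le_trans (Finset.card_union_le _ _) (add_le_add hecount1 hfcount1)
    omega
  obtain ⟨j, hj⟩ := Finset.card_pos.mp (by omega : 0 < T.card)
  have hjS : j ∈ S := (Finset.mem_sdiff.mp hj).1
  have hjbad := (Finset.mem_sdiff.mp hj).2
  have hje : (e j).degree ≤ (η : WithBot ℕ) := by
    by_contra hcon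
    exact hjbad (Finset.mem_union_left _
      (Finset.mem_filter.mpr ⟨Finset.mem_univ _, not_le.mp hcon⟩))
  have hjf : (f j).degree ≤ (η : WithBot ℕ) := by
    by_contra hcon
    exact hjbad (Finset.mem_union_right _
      (Finset.mem_filter.mpr ⟨Finset.mem_univ _, not_le.mp hcon⟩))
  -- D = divisor set
  set D := Finset.univ \ S with hD
  have hDcard : θ + 1 ≤ D.card + 1 := by
    have h1 : D.card = L - S.card := by
      rw [hD, Finset.card_sdiff_of_subset (Finset.subset_univ S)]
      simp
    omega
  -- tau count from hη
  have htaucount : (Finset.univ.filter fun i => tau i ≤ η).card ≤ θ - 1 := by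
    set l := (Finset.univ.val.map tau).sort (· ≤ ·) with hl
    have hlen : l.length = L := by
      rw [hl, Multiset.length_sort, Multiset.card_map]
      simp
    have hidx : θ - 1 < l.length := by omega
    have hget : η < l.get ⟨θ - 1, hidx⟩ := by
      have : nthSmallest (Finset.univ.val.map tau) θ = l.get ⟨θ - 1, hidx⟩ := by
        rw [nthSmallest, List.getD_eq_getElem (hn := hidx), List.get_eq_getElem]
      rwa [this] at hη
    have hsorted : l.Pairwise (· ≤ ·) := Multiset.pairwise_sort ..
    have hcount := sorted_filter_le_len hsorted hidx hget
    have hcrd : (Finset.univ.filter fun i => tau i ≤ η).card =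
        (l.filter (fun x => x ≤ η)).length := by
      have h1 : ((l : Multiset ℕ).filter (fun x => x ≤ η)).card =
          (l.filter (fun x => x ≤ η)).length := by
        simp
      have h2 : (l : Multiset ℕ) = Finset.univ.val.map tau := Multiset.sort_eq _ _
      rw [← h1, h2, Multiset.filter_map, Multiset.card_map]
      rfl
    omega
  -- find i ∈ D with tau i > η
  have hjD : j ∉ D := by
    rw [hD, Finset.mem_sdiff]; tauto
  set I := insert j D with hI
  have hIcard : θ + 1 ≤ I.card := by
    rw [hI, Finset.card_insert_of_notMem hjD]; omega
  have hIfilter : (I.filter fun i => tau i ≤ η).card ≤ θ - 1 :=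
    le_trans (Finset.card_le_card (Finset.filter_subset_filter _ (Finset.subset_univ I)))
      htaucount
  have hbig : 2 ≤ (I.filter fun i => ¬ tau i ≤ η).card := by
    have := Finset.card_filter_add_card_filter_not
      (s := I) (p := fun i => tau i ≤ η)
    omega
  obtain ⟨x, hx, y, hy, hxy⟩ := Finset.one_lt_card.mp (by omega : 1 < (I.filter fun i => ¬ tau i ≤ η).card)
  have hkey : ∃ i, i ∈ D ∧ η < tau i := by
    rcases eq_or_ne x j with rfl | hxj
    · refine ⟨y, ?_, ?_⟩
      · have := Finset.mem_filter.mp hy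
        rcases Finset.mem_insert.mp this.1 with h | h
        · exact absurd h.symm hxy
        · exact h
      · exact not_le.mp (Finset.mem_filter.mp hy).2
    · refine ⟨x, ?_, ?_⟩
      · have := Finset.mem_filter.mp hx
        rcases Finset.mem_insert.mp this.1 with h | h
        · exact absurd h hxj
        · exact h
      · exact not_le.mp (Finset.mem_filter.mp hx).2
  obtain ⟨i, hiD, hitau⟩ := hkey
  have hij : j ≠ i := by
    rintro rfl; exact hjD hiD
  -- tau i ≤ natDegree of gcd (m j) (m i)
  have htaui : tau i ≤ (gcd (m j) (m i)).natDegree := by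
    rw [htau i]
    exact Nat.sInf_le ⟨j, hij, rfl⟩
  -- gcd divides stuff
  set g : Polynomial F := gcd (m j) (m i) with hg
  have hgc : g ∣ c := dvd_trans (gcd_dvd_right _ _) (by
    have : i ∈ Finset.univ \ S := hiD
    rw [Finset.mem_sdiff, hS, Finset.mem_filter] at this
    have := this.2
    simp only [Finset.mem_univ, true_and] at this
    tauto)
  have hmjdvd : m j ∣ c - (f j - e j) := by
    rw [← hmodc j, Polynomial.modByMonic_eq_sub_mul_div c (m j), sub_sub_cancel]
    exact dvd_mul_right _ _
  have hgw : g ∣ f j - e j := by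
    have h1 : g ∣ c - (f j - e j) := dvd_trans (gcd_dvd_left _ _) hmjdvd
    have := dvd_sub hgc h1
    simpa using this
  have hwj0 : f j - e j ≠ 0 := by
    rw [hSiff j] at hjS
    exact sub_ne_zero.mpr hjS
  have hwdeg : (f j - e j).natDegree ≤ η := by
    rw [Polynomial.natDegree_le_iff_degree_le]
    exact le_trans (degree_sub_le _ _) (max_le hjf hje)
  have hgdeg : g.natDegree ≤ (f j - e j).natDegree :=
    Polynomial.natDegree_le_of_dvd hgw hwj0
  omega
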